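/- Let p, r ∈ (1,∞) with p ≠ r, let V > 0 be a real number and let B ∈ ℂ^{d×d}. Then there exist b, c ∈ ℂ^d such that: (a) b + 𝒥_p c = 0, so that for every A ∈ ℂ^{d×d} and δ > 0 with Re⟨Aξ, 𝒥_p ξ⟩ ≥ δ|ξ|² for all ξ, one has Γ_p^{(A,b,c,V)}(ξ) ≥ min{δ,1}(|ξ|² + V) for all ξ ∈ ℂ^d; and (b) there exists ξ ∈ ℂ^d with Γ_r^{(B,b,c,V)}(ξ) < 0. (Explicitly, one may take b = −(p−1)v − i(p/2)v and c = v + i(p/2)v for a suitable v ∈ ℝ^d with |v| large, so that b + 𝒥_r c = (r−p)v.) -/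

import Mathlib

open scoped ComplexConjugate

/-- The ℝ-linear operator `𝒥_p ξ = (p/2)(ξ + (1 − 2/p)·conj ξ)` on `ℂ^d`. -/
noncomputable def Jmap (p : ℝ) {d : ℕ} (ξ : EuclideanSpace ℂ (Fin d)) :
    EuclideanSpace ℂ (Fin d) :=
  WithLp.toLp 2 (fun i => (p / 2 : ℂ) * (ξ i + ((1 - 2 / p : ℝ) : ℂ) * conj (ξ i)))

/-- The Hermitian inner product `⟨x,y⟩ = ∑ x i * conj (y i)`, linear in the first variable. -/
noncomputable def hip {d : ℕ} (x y : EuclideanSpace ℂ (Fin d)) : ℂ :=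
  @inner ℂ _ _ y x

/-- A matrix acting on `ℂ^d`. -/
noncomputable def mulVecE {d : ℕ} (A : Matrix (Fin d) (Fin d) ℂ)
    (ξ : EuclideanSpace ℂ (Fin d)) : EuclideanSpace ℂ (Fin d) :=
  WithLp.toLp 2 (fun i => A.mulVec (fun j => ξ j) i)

/-- `Γ_p^{(A,b,c,V)}(ξ) = Re⟨Aξ, 𝒥_p ξ⟩ + Re⟨b + 𝒥_p c, ξ⟩ + V`. -/
noncomputable def Gamma (p : ℝ) {d : ℕ} (A : Matrix (Fin d) (Fin d) ℂ)
    (b c : EuclideanSpace ℂ (Fin d)) (V : ℝ) (ξ : EuclideanSpace ℂ (Fin d)) : ℝ :=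
  (hip (mulVecE A ξ) (Jmap p ξ)).re + (hip (b + Jmap p c) ξ).re + V

theorem stmt10 (d : ℕ) (hd : 1 ≤ d) (p r : ℝ) (hp : 1 < p) (hr : 1 < r) (hpr : p ≠ r)
    (V : ℝ) (hV : 0 < V) (B : Matrix (Fin d) (Fin d) ℂ) :
    ∃ b c : EuclideanSpace ℂ (Fin d),
      (b + Jmap p c = 0 ∧
        ∀ (A : Matrix (Fin d) (Fin d) ℂ) (δ : ℝ), 0 < δ →
          (∀ ξ : EuclideanSpace ℂ (Fin d), δ * ‖ξ‖ ^ 2 ≤ (hip (mulVecE A ξ) (Jmap p ξ)).re) →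
          ∀ ξ : EuclideanSpace ℂ (Fin d), min δ 1 * (‖ξ‖ ^ 2 + V) ≤ Gamma p A b c V ξ) ∧
      ∃ ξ : EuclideanSpace ℂ (Fin d), Gamma r B b c V ξ < 0 := by
  have hd0 : (0:ℕ) < d := hd
  have hp0 : p ≠ 0 := by linarith
  have hr0 : r ≠ 0 := by linarith
  have hrp : r - p ≠ 0 := sub_ne_zero.mpr (Ne.symm hpr)
  set i0 : Fin d := ⟨0, hd0⟩ with hi0
  set e : EuclideanSpace ℂ (Fin d) := EuclideanSpace.single i0 1 with he
  set q : ℝ := (hip (mulVecE B e) (Jmap r e)).re with hq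
  obtain ⟨s, hsval⟩ : ∃ s : ℝ, (r - p) * s = -(q + V + 1) :=
    ⟨-(q + V + 1) / (r - p), by field_simp⟩
  set c : EuclideanSpace ℂ (Fin d) := EuclideanSpace.single i0 (s:ℂ) with hc
  refine ⟨-(Jmap p c), c, ⟨neg_add_cancel _, ?_⟩, ⟨e, ?_⟩⟩
  · intro A δ hδ hA ξ
    have h0 : (-(Jmap p c) + Jmap p c) = (0 : EuclideanSpace ℂ (Fin d)) :=
      neg_add_cancel _
    have hG : Gamma p A (-(Jmap p c)) c V ξ
        = (hip (mulVecE A ξ) (Jmap p ξ)).re + V := by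
      rw [Gamma, h0]
      simp [hip]
    rw [hG]
    have := hA ξ
    nlinarith [min_le_left δ 1, min_le_right δ 1, sq_nonneg (‖ξ‖ : ℝ)]
  · have hval : ((-(Jmap p c) + Jmap r c) : EuclideanSpace ℂ (Fin d)) i0
        = (((r - p) * s : ℝ) : ℂ) := by
      show -(Jmap p c i0) + Jmap r c i0 = _
      simp only [Jmap, hc, EuclideanSpace.single_apply, if_pos rfl, Complex.conj_ofReal]
      have hp0' : (p:ℂ) ≠ 0 := Complex.ofReal_ne_zero.mpr hp0
      have hr0' : (r:ℂ) ≠ 0 := Complex.ofReal_ne_zero.mpr hr0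
      push_cast
      simp only [Complex.conj_ofReal]
      field_simp
      ring
    have hlin : (hip (-(Jmap p c) + Jmap r c) e).re = (r - p) * s := by
      rw [hip, he]
      rw [EuclideanSpace.inner_single_left]
      simp [hval]
    have hGe : Gamma r B (-(Jmap p c)) c V e = q + (r - p) * s + V := by
      rw [Gamma, hlin, hq]
    rw [hGe, hsval]
    linarith
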